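/- Let N ≥ 2 and let c = (12·(N−1)·(N+1))^(−1/4). Define f : EuclideanSpace ℝ (Fin N) → ℝ by f(y) = c·‖y‖. Then for every β ∈ ℝ and every y ≠ 0, f(y)²·Δ²(f³)(y) − β·⟨y, ∇f(y)⟩ + ((4β − 1)/4)·f(y) = 0. In particular, for every β the profile equation f²Δ²f³ − β y·∇f + ((4β−1)/4) f = 0 admits a positive, unbounded solution on ℝ^N \ {0}. -/

import Mathlib

open RealInnerProductSpace

/-- The Laplacian `Δu(x) = ∑ i, ∂²u/∂xᵢ²(x)` of `u : ℝ^N → ℝ`. -/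
noncomputable def lap {N : ℕ} (u : EuclideanSpace ℝ (Fin N) → ℝ)
    (x : EuclideanSpace ℝ (Fin N)) : ℝ :=
  ∑ i : Fin N, fderiv ℝ (fun y => fderiv ℝ u y (EuclideanSpace.single i 1)) x
    (EuclideanSpace.single i 1)

variable {N : ℕ}

local notation "E" => EuclideanSpace ℝ (Fin N)
local notation "e" i => (EuclideanSpace.single i 1 : EuclideanSpace ℝ (Fin N))

lemma hasFDerivAt_norm' {y : EuclideanSpace ℝ (Fin N)} (hy : y ≠ 0) :
    HasFDerivAt (fun z : EuclideanSpace ℝ (Fin N) => ‖z‖) (‖y‖⁻¹ • innerSL ℝ y) y := by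
  have hsq : HasFDerivAt (fun z : EuclideanSpace ℝ (Fin N) => ‖z‖ ^ 2)
      (2 • (innerSL ℝ y)) y := by
    simpa using (hasFDerivAt_id y).norm_sq
  have hne : ‖y‖ ^ 2 ≠ 0 := pow_ne_zero _ (norm_ne_zero_iff.mpr hy)
  have h3 := hsq.sqrt hne
  have hfun : (fun z : EuclideanSpace ℝ (Fin N) => Real.sqrt (‖z‖ ^ 2))
      = fun z : EuclideanSpace ℝ (Fin N) => ‖z‖ := by
    funext z; exact Real.sqrt_sq (norm_nonneg z)
  rw [hfun] at h3
  refine h3.congr_fderiv ?_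
  rw [Real.sqrt_sq (norm_nonneg y)]
  ext w
  simp [smul_smul]
  field_simp

lemma hasFDerivAt_inner_right {y v : EuclideanSpace ℝ (Fin N)} :
    HasFDerivAt (fun z : EuclideanSpace ℝ (Fin N) => ⟪z, v⟫) (innerSL ℝ v) y := by
  have : (fun z : EuclideanSpace ℝ (Fin N) => ⟪z, v⟫)
      = fun z : EuclideanSpace ℝ (Fin N) => ⟪v, z⟫ := by
    funext z; exact real_inner_comm _ _
  rw [this]
  exact (innerSL ℝ v).hasFDerivAt

/-- first directional derivative of `a‖z‖³` -/
lemma fderiv_cube {y : EuclideanSpace ℝ (Fin N)} (hy : y ≠ 0) (a : ℝ)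
    (v : EuclideanSpace ℝ (Fin N)) :
    fderiv ℝ (fun z : EuclideanSpace ℝ (Fin N) => a * ‖z‖ ^ 3) y v
      = a * 3 * (‖y‖ * ⟪y, v⟫) := by
  have h : HasFDerivAt (fun z : EuclideanSpace ℝ (Fin N) => a * ‖z‖ ^ 3)
      (a • ((3:ℝ) * ‖y‖ ^ 2) • (‖y‖⁻¹ • innerSL ℝ y)) y := by
    have := (((hasDerivAt_pow 3 ‖y‖).comp_hasFDerivAt y (hasFDerivAt_norm' hy)).const_mul a)
    simpa [Function.comp] using this
  rw [h.fderiv]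
  have hn : ‖y‖ ≠ 0 := norm_ne_zero_iff.mpr hy
  simp [smul_smul]
  field_simp

/-- second directional derivative of `a‖z‖³` -/
lemma fderiv2_cube {y : EuclideanSpace ℝ (Fin N)} (hy : y ≠ 0) (a : ℝ)
    (v : EuclideanSpace ℝ (Fin N)) (hv : ‖v‖ = 1) :
    fderiv ℝ (fun z => fderiv ℝ (fun z : EuclideanSpace ℝ (Fin N) => a * ‖z‖ ^ 3) z v) y v
      = a * 3 * (‖y‖ + ⟪y, v⟫ ^ 2 * ‖y‖⁻¹) := by
  have hev : (fun z => fderiv ℝ (fun z : EuclideanSpace ℝ (Fin N) => a * ‖z‖ ^ 3) z v)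
      =ᶠ[nhds y] fun z => a * 3 * (‖z‖ * ⟪z, v⟫) := by
    filter_upwards [IsOpen.mem_nhds isOpen_compl_singleton hy] with z hz
    exact fderiv_cube hz a v
  rw [hev.fderiv_eq]
  have h : HasFDerivAt (fun z : EuclideanSpace ℝ (Fin N) => a * 3 * (‖z‖ * ⟪z, v⟫))
      ((a * 3) • (‖y‖ • innerSL ℝ v + ⟪y, v⟫ • (‖y‖⁻¹ • innerSL ℝ y))) y :=
    ((hasFDerivAt_norm' hy).mul (hasFDerivAt_inner_right (v := v))).const_mul (a * 3)
  rw [h.fderiv]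
  have hvv : ⟪v, v⟫ = (1:ℝ) := by
    rw [real_inner_self_eq_norm_sq, hv]; norm_num
  simp only [ContinuousLinearMap.smul_apply, ContinuousLinearMap.add_apply, innerSL_apply_apply,
    smul_eq_mul, hvv]
  ring


lemma lap_congr {u v : EuclideanSpace ℝ (Fin N) → ℝ} {y : EuclideanSpace ℝ (Fin N)}
    (h : u =ᶠ[nhds y] v) : lap u y = lap v y := by
  unfold lap
  refine Finset.sum_congr rfl fun i _ => ?_
  have h2 : (fun z => fderiv ℝ u z (EuclideanSpace.single i 1))
      =ᶠ[nhds y] (fun z => fderiv ℝ v z (EuclideanSpace.single i 1)) := by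
    filter_upwards [h.fderiv (𝕜 := ℝ)] with z hz
    rw [hz]
  rw [h2.fderiv_eq]

lemma sum_inner_single_sq (y : EuclideanSpace ℝ (Fin N)) :
    ∑ i : Fin N, (⟪y, (EuclideanSpace.single i 1 : EuclideanSpace ℝ (Fin N))⟫ : ℝ) ^ 2
      = ‖y‖ ^ 2 := by
  have h : ∀ i : Fin N,
      (⟪y, (EuclideanSpace.single i 1 : EuclideanSpace ℝ (Fin N))⟫ : ℝ) = y i := by
    intro i
    simpa using EuclideanSpace.inner_single_right (𝕜 := ℝ) i 1 y
  simp only [h]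
  rw [EuclideanSpace.norm_eq, Real.sq_sqrt (by positivity)]
  simp [sq_abs]

lemma norm_single_one (i : Fin N) :
    ‖(EuclideanSpace.single i 1 : EuclideanSpace ℝ (Fin N))‖ = 1 := by
  simp

lemma lap_cube {y : EuclideanSpace ℝ (Fin N)} (hy : y ≠ 0) (a : ℝ) :
    lap (fun z => a * ‖z‖ ^ 3) y = a * 3 * ((N : ℝ) + 1) * ‖y‖ := by
  unfold lap
  have hn : ‖y‖ ≠ 0 := norm_ne_zero_iff.mpr hy
  rw [Finset.sum_congr rfl fun i _ => fderiv2_cube hy a _ (norm_single_one i)]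
  simp only [mul_add, Finset.sum_add_distrib, Finset.sum_const, Finset.card_univ,
    Fintype.card_fin, nsmul_eq_mul]
  rw [← Finset.mul_sum, ← Finset.sum_mul, sum_inner_single_sq]
  field_simp

lemma fderiv_lin {y : EuclideanSpace ℝ (Fin N)} (hy : y ≠ 0) (b : ℝ)
    (v : EuclideanSpace ℝ (Fin N)) :
    fderiv ℝ (fun z : EuclideanSpace ℝ (Fin N) => b * ‖z‖) y v
      = b * (‖y‖⁻¹ * ⟪y, v⟫) := by
  have h : HasFDerivAt (fun z : EuclideanSpace ℝ (Fin N) => b * ‖z‖)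
      (b • (‖y‖⁻¹ • innerSL ℝ y)) y := (hasFDerivAt_norm' hy).const_mul b
  rw [h.fderiv]
  simp [smul_smul]
  ring

lemma fderiv2_lin {y : EuclideanSpace ℝ (Fin N)} (hy : y ≠ 0) (b : ℝ)
    (v : EuclideanSpace ℝ (Fin N)) (hv : ‖v‖ = 1) :
    fderiv ℝ (fun z => fderiv ℝ (fun z : EuclideanSpace ℝ (Fin N) => b * ‖z‖) z v) y v
      = b * (‖y‖⁻¹ - ⟪y, v⟫ ^ 2 * (‖y‖ ^ 2)⁻¹ * ‖y‖⁻¹) := by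
  have hn : ‖y‖ ≠ 0 := norm_ne_zero_iff.mpr hy
  have hev : (fun z => fderiv ℝ (fun z : EuclideanSpace ℝ (Fin N) => b * ‖z‖) z v)
      =ᶠ[nhds y] fun z => b * (‖z‖⁻¹ * ⟪z, v⟫) := by
    filter_upwards [IsOpen.mem_nhds isOpen_compl_singleton hy] with z hz
    exact fderiv_lin hz b v
  rw [hev.fderiv_eq]
  have hinv : HasFDerivAt (fun z : EuclideanSpace ℝ (Fin N) => ‖z‖⁻¹)
      ((-(‖y‖ ^ 2)⁻¹) • (‖y‖⁻¹ • innerSL ℝ y)) y :=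
    (hasDerivAt_inv hn).comp_hasFDerivAt y (hasFDerivAt_norm' hy)
  have h : HasFDerivAt (fun z : EuclideanSpace ℝ (Fin N) => b * (‖z‖⁻¹ * ⟪z, v⟫))
      (b • (‖y‖⁻¹ • innerSL ℝ v + ⟪y, v⟫ • ((-(‖y‖ ^ 2)⁻¹) • (‖y‖⁻¹ • innerSL ℝ y)))) y :=
    (hinv.mul (hasFDerivAt_inner_right (v := v))).const_mul b
  rw [h.fderiv]
  have hvv : ⟪v, v⟫ = (1:ℝ) := by
    rw [real_inner_self_eq_norm_sq, hv]; norm_num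
  simp only [ContinuousLinearMap.smul_apply, ContinuousLinearMap.add_apply, innerSL_apply_apply,
    smul_eq_mul, hvv]
  ring

lemma lap_lin {y : EuclideanSpace ℝ (Fin N)} (hy : y ≠ 0) (b : ℝ) :
    lap (fun z => b * ‖z‖) y = b * ((N : ℝ) - 1) * ‖y‖⁻¹ := by
  unfold lap
  have hn : ‖y‖ ≠ 0 := norm_ne_zero_iff.mpr hy
  rw [Finset.sum_congr rfl fun i _ => fderiv2_lin hy b _ (norm_single_one i)]
  have hterm : ∀ i : Fin N,
      b * (‖y‖⁻¹ - (⟪y, (EuclideanSpace.single i 1 : EuclideanSpace ℝ (Fin N))⟫ : ℝ) ^ 2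
        * (‖y‖ ^ 2)⁻¹ * ‖y‖⁻¹)
      = b * ‖y‖⁻¹ - (⟪y, (EuclideanSpace.single i 1 : EuclideanSpace ℝ (Fin N))⟫ : ℝ) ^ 2
        * (b * (‖y‖ ^ 2)⁻¹ * ‖y‖⁻¹) := fun i => by ring
  simp only [hterm, Finset.sum_sub_distrib, Finset.sum_const, Finset.card_univ,
    Fintype.card_fin, nsmul_eq_mul]
  rw [← Finset.sum_mul, sum_inner_single_sq]
  field_simp

lemma lap_lap_cube {y : EuclideanSpace ℝ (Fin N)} (hy : y ≠ 0) (a : ℝ) :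
    lap (lap (fun z => a * ‖z‖ ^ 3)) y
      = a * 3 * ((N : ℝ) + 1) * ((N : ℝ) - 1) * ‖y‖⁻¹ := by
  have hev : lap (fun z => a * ‖z‖ ^ 3) =ᶠ[nhds y]
      fun z => (a * 3 * ((N : ℝ) + 1)) * ‖z‖ := by
    filter_upwards [IsOpen.mem_nhds isOpen_compl_singleton hy] with z hz
    exact lap_cube hz a
  rw [lap_congr hev, lap_lin hy]

/-- with `c = (12(N−1)(N+1))^{−1/4}`, the function `f(y) = c‖y‖`
solves the profile equation `f² Δ²(f³) − β ⟨y, ∇f⟩ + ((4β−1)/4) f = 0` for every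
`β` and every `y ≠ 0`; moreover it is positive on `ℝ^N \ {0}` and unbounded. -/
theorem stmt_8 (N : ℕ) (hN : 2 ≤ N) (c : ℝ)
    (hc : c = (12 * ((N : ℝ) - 1) * ((N : ℝ) + 1)) ^ (-(1 / 4) : ℝ))
    (f : EuclideanSpace ℝ (Fin N) → ℝ) (hf : f = fun y => c * ‖y‖) :
    (∀ (β : ℝ) (y : EuclideanSpace ℝ (Fin N)), y ≠ 0 →
      f y ^ 2 * lap (lap (fun z => f z ^ 3)) y - β * ⟪y, gradient f y⟫
        + ((4 * β - 1) / 4) * f y = 0) ∧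
    (∀ y : EuclideanSpace ℝ (Fin N), y ≠ 0 → 0 < f y) ∧
    ¬ BddAbove (Set.range f) := by
  subst hf
  have hN' : (2:ℝ) ≤ N := by exact_mod_cast hN
  have hb : (0:ℝ) < 12 * ((N:ℝ) - 1) * ((N:ℝ) + 1) := by nlinarith
  have hcpos : 0 < c := hc ▸ Real.rpow_pos_of_pos hb _
  have hc4 : c ^ 4 * (12 * ((N:ℝ) - 1) * ((N:ℝ) + 1)) = 1 := by
    have h4 : c ^ (4:ℕ) = (12 * ((N:ℝ) - 1) * ((N:ℝ) + 1)) ^ (-(1:ℝ)) := by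
      rw [hc, ← Real.rpow_natCast ((12 * ((N:ℝ) - 1) * ((N:ℝ) + 1)) ^ (-(1/4) : ℝ)) 4,
        ← Real.rpow_mul hb.le]
      norm_num
    rw [h4, Real.rpow_neg_one]
    exact inv_mul_cancel₀ hb.ne'
  refine ⟨?_, ?_, ?_⟩
  · intro β y hy
    have hn : ‖y‖ ≠ 0 := norm_ne_zero_iff.mpr hy
    rw [show (fun z : EuclideanSpace ℝ (Fin N) => (fun w : EuclideanSpace ℝ (Fin N) => c * ‖w‖) z ^ 3)
        = fun z : EuclideanSpace ℝ (Fin N) => c ^ 3 * ‖z‖ ^ 3 from funext fun z => by ring]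
    rw [lap_lap_cube hy (c ^ 3)]
    have hg : HasGradientAt (fun z : EuclideanSpace ℝ (Fin N) => c * ‖z‖)
        ((c * ‖y‖⁻¹) • y) y := by
      rw [hasGradientAt_iff_hasFDerivAt]
      refine ((hasFDerivAt_norm' hy).const_mul c).congr_fderiv ?_
      ext w
      simp [InnerProductSpace.toDual_apply_apply, inner_smul_left, smul_smul]
    rw [hg.gradient, real_inner_smul_right, real_inner_self_eq_norm_sq]
    field_simp
    linear_combination (c * ‖y‖) * hc4
  · intro y hy
    exact mul_pos hcpos (norm_pos_iff.mpr hy)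
  · rintro ⟨M, hM⟩
    have hi : Fin N := ⟨0, by omega⟩
    have hmem : c * ‖(EuclideanSpace.single hi ((|M| + 1) / c) : EuclideanSpace ℝ (Fin N))‖
        ∈ Set.range (fun y : EuclideanSpace ℝ (Fin N) => c * ‖y‖) :=
      ⟨EuclideanSpace.single hi ((|M| + 1) / c), rfl⟩
    have hle := hM hmem
    rw [EuclideanSpace.norm_single] at hle
    have ht : (0:ℝ) ≤ (|M| + 1) / c := by positivity
    rw [Real.norm_eq_abs, abs_of_nonneg ht] at hle
    rw [mul_div_cancel₀ _ hcpos.ne'] at hle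
    have := le_abs_self M
    linarith
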